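/- Let λ > 0 and let n ≥ 2 be an integer. Then ∫_0^π ( 2λ/(1 + λ² + (1 − λ²)·cos θ) )^{n−1} · (sin θ)^{n−2} dθ = ∫_0^π (sin θ)^{n−2} dθ. -/

import Mathlib

open Real Set

/-- For `λ > 0` and an integer `n ≥ 2`,
`∫_0^π (2λ/(1 + λ² + (1 - λ²)cos θ))^{n-1} (sin θ)^{n-2} dθ = ∫_0^π (sin θ)^{n-2} dθ`,
i.e. `∫_{S^{n-1}} |DΦ^λ|^{n-1} = ω_{n-1}` for the spherical homothety `Φ^λ`. -/
theorem stmt15 (lam : ℝ) (hlam : 0 < lam) (n : ℕ) (hn : 2 ≤ n) :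
    ∫ θ in (0:ℝ)..Real.pi,
        (2 * lam / (1 + lam ^ 2 + (1 - lam ^ 2) * Real.cos θ)) ^ (n - 1)
          * Real.sin θ ^ (n - 2)
      = ∫ θ in (0:ℝ)..Real.pi, Real.sin θ ^ (n - 2) := by
  have pi_pos := Real.pi_pos
  set D : ℝ → ℝ := fun θ => 1 + lam ^ 2 + (1 - lam ^ 2) * Real.cos θ with hDdef
  have hDpos : ∀ θ : ℝ, 0 < D θ := by
    intro θ
    have h1 := Real.neg_one_le_cos θ
    have h2 := Real.cos_le_one θ
    have hl2 : 0 < lam ^ 2 := pow_pos hlam 2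
    simp only [hDdef]
    nlinarith [mul_nonneg hl2.le (by linarith : (0:ℝ) ≤ 1 - Real.cos θ),
      mul_nonneg hl2.le (by linarith : (0:ℝ) ≤ 1 + Real.cos θ)]
  set N : ℝ → ℝ := fun θ => (1 + lam ^ 2) * Real.cos θ + (1 - lam ^ 2) with hNdef
  set g : ℝ → ℝ := fun θ => N θ / D θ with hgdef
  set φ : ℝ → ℝ := fun θ => Real.arccos (g θ) with hφdef
  -- key algebraic identity
  have hkey : ∀ θ : ℝ, 1 - g θ ^ 2 = (2 * lam * Real.sin θ / D θ) ^ 2 := by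
    intro θ
    have hD := (hDpos θ).ne'
    have hs := Real.sin_sq_add_cos_sq θ
    have h4 : lam ^ 2 * (Real.sin θ ^ 2 + Real.cos θ ^ 2) = lam ^ 2 := by rw [hs, mul_one]
    simp only [hgdef]
    field_simp
    simp only [hNdef, hDdef]
    nlinarith [hs, h4]
  have hsinφ : ∀ θ ∈ Icc (0:ℝ) Real.pi, Real.sin (φ θ) = 2 * lam * Real.sin θ / D θ := by
    intro θ hθ
    have hs : 0 ≤ Real.sin θ := Real.sin_nonneg_of_nonneg_of_le_pi hθ.1 hθ.2
    have hnn : 0 ≤ 2 * lam * Real.sin θ / D θ := div_nonneg (mul_nonneg (by positivity) hs) (hDpos θ).le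
    rw [hφdef]
    simp only []
    rw [Real.sin_arccos, hkey θ, Real.sqrt_sq hnn]
  -- continuity
  have hDcont : Continuous D := by continuity
  have hgcont : Continuous g := by
    apply Continuous.div (by continuity) hDcont fun θ => (hDpos θ).ne'
  have hφcont : Continuous φ := Real.continuous_arccos.comp hgcont
  -- endpoints
  have hg0 : g 0 = 1 := by simp [hgdef, hNdef, hDdef]
  have hgπ : g Real.pi = -1 := by
    have h2 : (0:ℝ) < 2 * lam ^ 2 := by positivity
    simp [hgdef, hNdef, hDdef]
    rw [div_eq_iff (by nlinarith)]
    ring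
  have hφ0 : φ 0 = 0 := by rw [hφdef]; simp [hg0]
  have hφπ : φ Real.pi = Real.pi := by rw [hφdef]; simp [hgπ, Real.arccos_neg_one]
  -- derivative on the interior
  have hderiv : ∀ θ ∈ Ioo (0:ℝ) Real.pi, HasDerivAt φ (2 * lam / D θ) θ := by
    intro θ hθ
    have hs : 0 < Real.sin θ := Real.sin_pos_of_pos_of_lt_pi hθ.1 hθ.2
    have hD := hDpos θ
    have hsq : 0 < 1 - g θ ^ 2 := by rw [hkey θ]; positivity
    have hg1 : g θ ≠ 1 := by nlinarith [hsq]
    have hgm1 : g θ ≠ -1 := by nlinarith [hsq]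
    have hN' : HasDerivAt N (-((1 + lam ^ 2) * Real.sin θ)) θ := by
      simpa [hNdef] using ((Real.hasDerivAt_cos θ).const_mul (1 + lam ^ 2)).add_const (1 - lam ^ 2)
    have hD' : HasDerivAt D (-((1 - lam ^ 2) * Real.sin θ)) θ := by
      simpa [hDdef] using (((Real.hasDerivAt_cos θ).const_mul (1 - lam ^ 2)).const_add (1 + lam ^ 2))
    have hg' : HasDerivAt g (-(4 * lam ^ 2 * Real.sin θ) / D θ ^ 2) θ := by
      have := hN'.div hD' hD.ne'
      refine this.congr_deriv ?_
      have hc := Real.sin_sq_add_cos_sq θ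
      simp only [hNdef, hDdef]
      field_simp
      ring
    have harc := (Real.hasDerivAt_arccos hgm1 hg1).comp θ hg'
    have hsqrt : Real.sqrt (1 - g θ ^ 2) = 2 * lam * Real.sin θ / D θ := by
      rw [hkey θ, Real.sqrt_sq (by positivity)]
    refine harc.congr_deriv ?_
    rw [hsqrt]
    field_simp
    ring
  -- rewrite the integrand
  have hLHS :
      (∫ θ in (0:ℝ)..Real.pi,
        (2 * lam / D θ) ^ (n - 1) * Real.sin θ ^ (n - 2))
      = ∫ θ in (0:ℝ)..Real.pi, (2 * lam / D θ) • (fun u => Real.sin u ^ (n - 2)) (φ θ) := by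
    apply intervalIntegral.integral_congr
    intro θ hθ
    rw [uIcc_of_le pi_pos.le] at hθ
    have hsφ := hsinφ θ hθ
    simp only [smul_eq_mul, Function.comp]
    rw [hsφ]
    obtain ⟨m, hm⟩ : ∃ m, n = m + 2 := ⟨n - 2, by omega⟩
    subst hm
    simp only [Nat.add_sub_cancel, show m + 2 - 1 = m + 1 from rfl]
    have hD := (hDpos θ).ne'
    field_simp
    linear_combination (lam * lam ^ m * (D θ)⁻¹ ^ m * Real.sin θ ^ m * 2 ^ m * 2) * mul_inv_cancel₀ hD
  calc ∫ θ in (0:ℝ)..Real.pi,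
        (2 * lam / (1 + lam ^ 2 + (1 - lam ^ 2) * Real.cos θ)) ^ (n - 1)
          * Real.sin θ ^ (n - 2)
      = ∫ θ in (0:ℝ)..Real.pi, (2 * lam / D θ) • (fun u => Real.sin u ^ (n - 2)) (φ θ) := hLHS
    _ = ∫ u in (φ 0)..(φ Real.pi), Real.sin u ^ (n - 2) := by
        have hf'cont : Continuous fun θ => 2 * lam / D θ :=
          Continuous.div continuous_const hDcont fun θ => (hDpos θ).ne'
        have hgc : Continuous fun u : ℝ => Real.sin u ^ (n - 2) :=
          Real.continuous_sin.pow _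
        rw [← intervalIntegral.integral_comp_smul_deriv'' (f := φ)
          (f' := fun θ => 2 * lam / D θ) (g := fun u => Real.sin u ^ (n - 2))
          (hφcont.continuousOn)
          (fun x hx => by
            rw [min_eq_left pi_pos.le, max_eq_right pi_pos.le] at hx
            exact (hderiv x hx).hasDerivWithinAt)
          hf'cont.continuousOn hgc.continuousOn]
        rfl
    _ = ∫ u in (0:ℝ)..Real.pi, Real.sin u ^ (n - 2) := by rw [hφ0, hφπ]
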